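/- Let μ ∈ (0,1) and s ∈ (0, μ). Define r : [0, ∞) → ℝ by r(τ) = √(s² − 2τ·s·√(μ² − s²) + μ²τ²) and θ : [0, ∞) → ℝ by θ(τ) = π + τ − arctan(μ²τ/s² − √(μ²/s² − 1)) − arctan(√(μ²/s² − 1)). Then r(τ) > 0 for all τ ≥ 0, θ(0) = π, and θ is differentiable with θ'(τ) = 1 − s²/r(τ)² for all τ ≥ 0. -/

import Mathlib

/-- For `μ ∈ (0,1)`, `s ∈ (0,μ)`, with
`r(τ) = √(s² − 2τs√(μ² − s²) + μ²τ²)` and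
`θ(τ) = π + τ − arctan(μ²τ/s² − √(μ²/s² − 1)) − arctan(√(μ²/s² − 1))`:
`r(τ) > 0` for all `τ ≥ 0`, `θ(0) = π`, and `θ'(τ) = 1 − s²/r(τ)²` for all `τ ≥ 0`. -/
theorem stmt_10 (μ s : ℝ) (hμ : μ ∈ Set.Ioo (0 : ℝ) 1) (hs : s ∈ Set.Ioo 0 μ)
    (r θ : ℝ → ℝ)
    (hr : ∀ τ : ℝ, r τ =
      Real.sqrt (s ^ 2 - 2 * τ * s * Real.sqrt (μ ^ 2 - s ^ 2) + μ ^ 2 * τ ^ 2))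
    (hθ : ∀ τ : ℝ, θ τ =
      Real.pi + τ - Real.arctan (μ ^ 2 * τ / s ^ 2 - Real.sqrt (μ ^ 2 / s ^ 2 - 1))
        - Real.arctan (Real.sqrt (μ ^ 2 / s ^ 2 - 1))) :
    (∀ τ : ℝ, 0 ≤ τ → 0 < r τ) ∧
    θ 0 = Real.pi ∧
    (∀ τ : ℝ, 0 ≤ τ → HasDerivAt θ (1 - s ^ 2 / (r τ) ^ 2) τ) := by
  obtain ⟨hμ0, hμ1⟩ := hμ
  obtain ⟨hs0, hsμ⟩ := hs
  set t := Real.sqrt (μ ^ 2 - s ^ 2) with ht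
  have hts : 0 ≤ μ ^ 2 - s ^ 2 := by nlinarith
  have ht2 : t ^ 2 = μ ^ 2 - s ^ 2 := Real.sq_sqrt hts
  have ht0 : 0 ≤ t := Real.sqrt_nonneg _
  have ha : Real.sqrt (μ ^ 2 / s ^ 2 - 1) = t / s := by
    have : μ ^ 2 / s ^ 2 - 1 = (μ ^ 2 - s ^ 2) / s ^ 2 := by
      field_simp
    rw [this, Real.sqrt_div hts, Real.sqrt_sq hs0.le]
  have hQ : ∀ τ : ℝ, 0 < s ^ 2 - 2 * τ * s * t + μ ^ 2 * τ ^ 2 := by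
    intro τ
    have hkey : μ ^ 2 * (s ^ 2 - 2 * τ * s * t + μ ^ 2 * τ ^ 2)
        = (μ ^ 2 * τ - s * t) ^ 2 + s ^ 4 := by linear_combination (-s ^ 2) * ht2
    nlinarith [sq_nonneg (μ ^ 2 * τ - s * t), pow_pos hs0 4, pow_pos hμ0 2]
  have hrpos : ∀ τ : ℝ, 0 < r τ := by
    intro τ
    rw [hr τ]
    exact Real.sqrt_pos.mpr (hQ τ)
  have hr2 : ∀ τ : ℝ, r τ ^ 2 = s ^ 2 - 2 * τ * s * t + μ ^ 2 * τ ^ 2 := by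
    intro τ
    rw [hr τ]
    exact Real.sq_sqrt (hQ τ).le
  refine ⟨fun τ _ => hrpos τ, ?_, ?_⟩
  · rw [hθ 0, ha]
    simp [Real.arctan_neg]
  · intro τ _
    have hconc : θ = fun τ => Real.pi + τ
        - Real.arctan (μ ^ 2 * τ / s ^ 2 - Real.sqrt (μ ^ 2 / s ^ 2 - 1))
        - Real.arctan (Real.sqrt (μ ^ 2 / s ^ 2 - 1)) := funext hθ
    rw [hconc]
    set a := Real.sqrt (μ ^ 2 / s ^ 2 - 1) with haa
    have hg : HasDerivAt (fun τ : ℝ => μ ^ 2 * τ / s ^ 2 - a) (μ ^ 2 / s ^ 2) τ := by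
      simpa using ((hasDerivAt_id τ).const_mul (μ ^ 2) |>.div_const (s ^ 2)).sub_const a
    have harc : HasDerivAt (fun τ : ℝ => Real.arctan (μ ^ 2 * τ / s ^ 2 - a))
        (1 / (1 + (μ ^ 2 * τ / s ^ 2 - a) ^ 2) * (μ ^ 2 / s ^ 2)) τ :=
      (Real.hasDerivAt_arctan _).comp τ hg
    have h1 : HasDerivAt (fun τ : ℝ => Real.pi + τ - Real.arctan (μ ^ 2 * τ / s ^ 2 - a)
        - Real.arctan a)
        (1 - 1 / (1 + (μ ^ 2 * τ / s ^ 2 - a) ^ 2) * (μ ^ 2 / s ^ 2)) τ := by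
      simpa using (((hasDerivAt_id τ).const_add Real.pi).sub harc).sub_const (Real.arctan a)
    convert h1 using 2
    rw [ha, hr2 τ]
    have hden : (0:ℝ) < 1 + (μ ^ 2 * τ / s ^ 2 - t / s) ^ 2 := by positivity
    have hQ' := hQ τ
    field_simp
    rw [div_eq_iff (by intro h; nlinarith)]
    linear_combination (s ^ 2) * ht2
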